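/- The 28 matrices consisting of {I_α : 1 ≤ α ≤ 7} together with {I_α I_β : 1 ≤ α < β ≤ 7} are linearly independent in the space M₈(ℝ) of real 8×8 matrices. -/

import Mathlib

open scoped BigOperators
open Matrix

noncomputable section

namespace OC

/-- Octonions, identified with ℝ⁸. -/
abbrev Octo : Type := Fin 8 → ℝ

/-- The seven positively-oriented triples Ω. -/
def OmegaT : List (Fin 8 × Fin 8 × Fin 8) :=
  [(1,2,3),(2,4,6),(4,3,5),(3,6,7),(6,5,1),(5,7,2),(7,1,4)]

/-- The six permutations of a triple, with their signs. -/
def signedPerms3 (t : Fin 8 × Fin 8 × Fin 8) : List (ℝ × (Fin 8 × Fin 8 × Fin 8)) :=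
  [(1,(t.1,t.2.1,t.2.2)), (1,(t.2.1,t.2.2,t.1)), (1,(t.2.2,t.1,t.2.1)),
   (-1,(t.2.1,t.1,t.2.2)), (-1,(t.1,t.2.2,t.2.1)), (-1,(t.2.2,t.2.1,t.1))]

/-- The totally antisymmetric symbol ε with ε(α,β,γ) = 1 on Ω and vanishing on triples
that are not permutations of a triple of Ω. -/
def eps (a b c : Fin 8) : ℝ :=
  (((OmegaT.map signedPerms3).flatten).map (fun p => if p.2 = (a,b,c) then p.1 else 0)).sum

/-- Coefficient of `e d` in the product `e a * e b`: `e 0` is a two-sided unit and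
`e α * e β = -δ_{αβ} e 0 + ∑ γ, ε(α,β,γ) e γ` for imaginary indices. -/
def mulCoef (a b d : Fin 8) : ℝ :=
  if a = 0 then (if d = b then 1 else 0)
  else if b = 0 then (if d = a then 1 else 0)
  else (if a = b ∧ d = 0 then -1 else 0) + eps a b d

/-- Octonion multiplication on ℝ⁸. -/
def omul (x y : Octo) : Octo := fun d => ∑ a, ∑ b, x a * y b * mulCoef a b d

/-- The standard basis octonions e₀,…,e₇. -/
def e (a : Fin 8) : Octo := fun d => if d = a then 1 else 0

/-- Real part. -/
def reO (x : Octo) : ℝ := x 0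

/-- Imaginary part. -/
def imO (x : Octo) : Octo := fun d => if d = 0 then 0 else x d

/-- Octonion conjugation. -/
def conjO (x : Octo) : Octo := fun d => if d = 0 then x 0 else -x d

/-- Squared Euclidean norm |x|². -/
def normSq (x : Octo) : ℝ := ∑ a, (x a)^2

/-- Inverse of a nonzero octonion, q⁻¹ = q̄ / |q|². -/
def oinv (q : Octo) : Octo := (normSq q)⁻¹ • conjO q

/-- The seven quadruples Λ. -/
def LambdaT : List (Fin 8 × Fin 8 × Fin 8 × Fin 8) :=
  [(5,4,6,7),(7,3,5,1),(1,6,7,2),(2,5,1,4),(4,7,2,3),(3,1,4,6),(6,2,5,3)]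

/-- The 24 permutations of a quadruple, with their signs. -/
def signedPerms4 (t : Fin 8 × Fin 8 × Fin 8 × Fin 8) :
    List (ℝ × (Fin 8 × Fin 8 × Fin 8 × Fin 8)) :=
  let a := t.1; let b := t.2.1; let c := t.2.2.1; let d := t.2.2.2
  [ (1,(a,b,c,d)), (-1,(a,b,d,c)), (-1,(a,c,b,d)), (1,(a,c,d,b)), (1,(a,d,b,c)), (-1,(a,d,c,b)),
    (-1,(b,a,c,d)), (1,(b,a,d,c)), (1,(b,c,a,d)), (-1,(b,c,d,a)), (-1,(b,d,a,c)), (1,(b,d,c,a)),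
    (1,(c,a,b,d)), (-1,(c,a,d,b)), (-1,(c,b,a,d)), (1,(c,b,d,a)), (1,(c,d,a,b)), (-1,(c,d,b,a)),
    (-1,(d,a,b,c)), (1,(d,a,c,b)), (1,(d,b,a,c)), (-1,(d,b,c,a)), (-1,(d,c,a,b)), (1,(d,c,b,a)) ]

/-- The totally antisymmetric symbol ε₄ with value 1 on Λ and vanishing on quadruples
that are not permutations of a quadruple of Λ. -/
def eps4 (a b c d : Fin 8) : ℝ :=
  (((LambdaT.map signedPerms4).flatten).map (fun p => if p.2 = (a,b,c,d) then p.1 else 0)).sum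

/-- Matrix of left multiplication by `e a`: `(Imat a) d c` is the coefficient of `e d` in
`e a * e c`. -/
def Imat (a : Fin 8) : Matrix (Fin 8) (Fin 8) ℝ := Matrix.of fun d c => mulCoef a c d

/-- Octonionic Heisenberg group multiplication on 𝕆 × Im 𝕆 (realized inside 𝕆 × 𝕆):
`(x,t)·(y,s) = (x+y, t+s+2 Im(x ȳ))`. -/
def hmul (p q : Octo × Octo) : Octo × Octo :=
  (p.1 + q.1, p.2 + q.2 + (2:ℝ) • imO (omul p.1 (conjO q.1)))

/-- Group inverse in the octonionic Heisenberg group. -/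
def hinv (p : Octo × Octo) : Octo × Octo := (-p.1, -p.2)

/-- Homogeneous norm ‖(x,t)‖ = (|x|⁴+|t|²)^{1/4}. -/
def hnorm (p : Octo × Octo) : ℝ := ((normSq p.1)^2 + normSq p.2) ^ ((1:ℝ)/4)

/-- The inversion R(x,t) = (−((|x|²e₀ − t)⁻¹)x, −t/(|x|⁴+|t|²)). -/
def Rmap (p : Octo × Octo) : Octo × Octo :=
  (-(omul (oinv (normSq p.1 • e 0 - p.2)) p.1),
   -(((normSq p.1)^2 + normSq p.2)⁻¹ • p.2))

/-- E^β = I_β for β ∈ {1,…,7}, indexed here by `Fin 7` via `β ↦ β+1`. -/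
def E7 (β : Fin 7) : Matrix (Fin 8) (Fin 8) ℝ := Imat β.succ

/-- Octonionic Heisenberg group multiplication in ℝ⁸ × ℝ⁷ coordinates. -/
def hmulC (p q : (Fin 8 → ℝ) × (Fin 7 → ℝ)) : (Fin 8 → ℝ) × (Fin 7 → ℝ) :=
  (p.1 + q.1, fun β => p.2 β + q.2 β + 2 * ∑ a, ∑ b, E7 β a b * p.1 a * q.1 b)

/-- The left-invariant horizontal vector fields
`X_a = ∂/∂x_a + 2 ∑_{β,b} (E^β)_{ba} x_b ∂/∂t_β`. -/
def Xop (a : Fin 8) (f : ((Fin 8 → ℝ) × (Fin 7 → ℝ)) → ℝ)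
    (p : (Fin 8 → ℝ) × (Fin 7 → ℝ)) : ℝ :=
  fderiv ℝ f p ((Pi.single a 1 : Fin 8 → ℝ), (0 : Fin 7 → ℝ))
    + 2 * ∑ β : Fin 7, ∑ b : Fin 8,
        E7 β b a * p.1 b * fderiv ℝ f p ((0 : Fin 8 → ℝ), (Pi.single β 1 : Fin 7 → ℝ))

/-- ρ(x,t) = |x|⁴ + |t|². -/
def rho (p : (Fin 8 → ℝ) × (Fin 7 → ℝ)) : ℝ :=
  (∑ a, (p.1 a)^2)^2 + ∑ β, (p.2 β)^2


/-! ### Auxiliary ℤ-valued mirrors of the structure constants -/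

def signedPerms3Z (t : Fin 8 × Fin 8 × Fin 8) : List (ℤ × (Fin 8 × Fin 8 × Fin 8)) :=
  [(1,(t.1,t.2.1,t.2.2)), (1,(t.2.1,t.2.2,t.1)), (1,(t.2.2,t.1,t.2.1)),
   (-1,(t.2.1,t.1,t.2.2)), (-1,(t.1,t.2.2,t.2.1)), (-1,(t.2.2,t.2.1,t.1))]

def epsZ (a b c : Fin 8) : ℤ :=
  (((OmegaT.map signedPerms3Z).flatten).map (fun p => if p.2 = (a,b,c) then p.1 else 0)).sum

def mulCoefZ (a b d : Fin 8) : ℤ :=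
  if a = 0 then (if d = b then 1 else 0)
  else if b = 0 then (if d = a then 1 else 0)
  else (if a = b ∧ d = 0 then -1 else 0) + epsZ a b d

lemma mulCoef_eqZ (a b d : Fin 8) : mulCoef a b d = ((mulCoefZ a b d : ℤ) : ℝ) := by
  simp only [mulCoef, mulCoefZ, eps, epsZ, OmegaT, signedPerms3, signedPerms3Z,
    List.map_cons, List.map_nil, List.flatten_cons, List.flatten_nil, List.append_nil,
    List.cons_append, List.nil_append, List.sum_cons, List.sum_nil]
  push_cast [apply_ite (fun z : ℤ => (z : ℝ))]
  norm_num

def prodZ (a b d c : Fin 8) : ℤ := ∑ k : Fin 8, mulCoefZ a k d * mulCoefZ b c k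

lemma prod_entryZ (a b d c : Fin 8) : (Imat a * Imat b) d c = ((prodZ a b d c : ℤ) : ℝ) := by
  rw [Matrix.mul_apply]
  simp only [prodZ, Imat, Matrix.of_apply, mulCoef_eqZ]
  push_cast
  rfl

lemma Imat_entryZ (a d c : Fin 8) : Imat a d c = ((mulCoefZ a c d : ℤ) : ℝ) := mulCoef_eqZ a c d

def entZ : Fin 28 → Matrix (Fin 8) (Fin 8) ℤ :=
  ![!![0, -1, 0, 0, 0, 0, 0, 0;1, 0, 0, 0, 0, 0, 0, 0;0, 0, 0, -1, 0, 0, 0, 0;0, 0, 1, 0, 0, 0, 0, 0;0, 0, 0, 0, 0, 0, 0, -1;0, 0, 0, 0, 0, 0, 1, 0;0, 0, 0, 0, 0, -1, 0, 0;0, 0, 0, 0, 1, 0, 0, 0],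
  !![0, 0, -1, 0, 0, 0, 0, 0;0, 0, 0, 1, 0, 0, 0, 0;1, 0, 0, 0, 0, 0, 0, 0;0, -1, 0, 0, 0, 0, 0, 0;0, 0, 0, 0, 0, 0, -1, 0;0, 0, 0, 0, 0, 0, 0, -1;0, 0, 0, 0, 1, 0, 0, 0;0, 0, 0, 0, 0, 1, 0, 0],
  !![0, 0, 0, -1, 0, 0, 0, 0;0, 0, -1, 0, 0, 0, 0, 0;0, 1, 0, 0, 0, 0, 0, 0;1, 0, 0, 0, 0, 0, 0, 0;0, 0, 0, 0, 0, 1, 0, 0;0, 0, 0, 0, -1, 0, 0, 0;0, 0, 0, 0, 0, 0, 0, -1;0, 0, 0, 0, 0, 0, 1, 0],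
  !![0, 0, 0, 0, -1, 0, 0, 0;0, 0, 0, 0, 0, 0, 0, 1;0, 0, 0, 0, 0, 0, 1, 0;0, 0, 0, 0, 0, -1, 0, 0;1, 0, 0, 0, 0, 0, 0, 0;0, 0, 0, 1, 0, 0, 0, 0;0, 0, -1, 0, 0, 0, 0, 0;0, -1, 0, 0, 0, 0, 0, 0],
  !![0, 0, 0, 0, 0, -1, 0, 0;0, 0, 0, 0, 0, 0, -1, 0;0, 0, 0, 0, 0, 0, 0, 1;0, 0, 0, 0, 1, 0, 0, 0;0, 0, 0, -1, 0, 0, 0, 0;1, 0, 0, 0, 0, 0, 0, 0;0, 1, 0, 0, 0, 0, 0, 0;0, 0, -1, 0, 0, 0, 0, 0],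
  !![0, 0, 0, 0, 0, 0, -1, 0;0, 0, 0, 0, 0, 1, 0, 0;0, 0, 0, 0, -1, 0, 0, 0;0, 0, 0, 0, 0, 0, 0, 1;0, 0, 1, 0, 0, 0, 0, 0;0, -1, 0, 0, 0, 0, 0, 0;1, 0, 0, 0, 0, 0, 0, 0;0, 0, 0, -1, 0, 0, 0, 0],
  !![0, 0, 0, 0, 0, 0, 0, -1;0, 0, 0, 0, -1, 0, 0, 0;0, 0, 0, 0, 0, -1, 0, 0;0, 0, 0, 0, 0, 0, -1, 0;0, 1, 0, 0, 0, 0, 0, 0;0, 0, 1, 0, 0, 0, 0, 0;0, 0, 0, 1, 0, 0, 0, 0;1, 0, 0, 0, 0, 0, 0, 0],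
  !![0, 0, 0, -1, 0, 0, 0, 0;0, 0, -1, 0, 0, 0, 0, 0;0, 1, 0, 0, 0, 0, 0, 0;1, 0, 0, 0, 0, 0, 0, 0;0, 0, 0, 0, 0, -1, 0, 0;0, 0, 0, 0, 1, 0, 0, 0;0, 0, 0, 0, 0, 0, 0, 1;0, 0, 0, 0, 0, 0, -1, 0],
  !![0, 0, 1, 0, 0, 0, 0, 0;0, 0, 0, -1, 0, 0, 0, 0;-1, 0, 0, 0, 0, 0, 0, 0;0, 1, 0, 0, 0, 0, 0, 0;0, 0, 0, 0, 0, 0, -1, 0;0, 0, 0, 0, 0, 0, 0, -1;0, 0, 0, 0, 1, 0, 0, 0;0, 0, 0, 0, 0, 1, 0, 0],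
  !![0, 0, 0, 0, 0, 0, 0, -1;0, 0, 0, 0, -1, 0, 0, 0;0, 0, 0, 0, 0, 1, 0, 0;0, 0, 0, 0, 0, 0, 1, 0;0, 1, 0, 0, 0, 0, 0, 0;0, 0, -1, 0, 0, 0, 0, 0;0, 0, 0, -1, 0, 0, 0, 0;1, 0, 0, 0, 0, 0, 0, 0],
  !![0, 0, 0, 0, 0, 0, 1, 0;0, 0, 0, 0, 0, -1, 0, 0;0, 0, 0, 0, -1, 0, 0, 0;0, 0, 0, 0, 0, 0, 0, 1;0, 0, 1, 0, 0, 0, 0, 0;0, 1, 0, 0, 0, 0, 0, 0;-1, 0, 0, 0, 0, 0, 0, 0;0, 0, 0, -1, 0, 0, 0, 0],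
  !![0, 0, 0, 0, 0, -1, 0, 0;0, 0, 0, 0, 0, 0, -1, 0;0, 0, 0, 0, 0, 0, 0, -1;0, 0, 0, 0, -1, 0, 0, 0;0, 0, 0, 1, 0, 0, 0, 0;1, 0, 0, 0, 0, 0, 0, 0;0, 1, 0, 0, 0, 0, 0, 0;0, 0, 1, 0, 0, 0, 0, 0],
  !![0, 0, 0, 0, 1, 0, 0, 0;0, 0, 0, 0, 0, 0, 0, -1;0, 0, 0, 0, 0, 0, 1, 0;0, 0, 0, 0, 0, -1, 0, 0;-1, 0, 0, 0, 0, 0, 0, 0;0, 0, 0, 1, 0, 0, 0, 0;0, 0, -1, 0, 0, 0, 0, 0;0, 1, 0, 0, 0, 0, 0, 0],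
  !![0, -1, 0, 0, 0, 0, 0, 0;1, 0, 0, 0, 0, 0, 0, 0;0, 0, 0, -1, 0, 0, 0, 0;0, 0, 1, 0, 0, 0, 0, 0;0, 0, 0, 0, 0, 0, 0, 1;0, 0, 0, 0, 0, 0, -1, 0;0, 0, 0, 0, 0, 1, 0, 0;0, 0, 0, 0, -1, 0, 0, 0],
  !![0, 0, 0, 0, 0, 0, -1, 0;0, 0, 0, 0, 0, -1, 0, 0;0, 0, 0, 0, -1, 0, 0, 0;0, 0, 0, 0, 0, 0, 0, -1;0, 0, 1, 0, 0, 0, 0, 0;0, 1, 0, 0, 0, 0, 0, 0;1, 0, 0, 0, 0, 0, 0, 0;0, 0, 0, 1, 0, 0, 0, 0],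
  !![0, 0, 0, 0, 0, 0, 0, -1;0, 0, 0, 0, 1, 0, 0, 0;0, 0, 0, 0, 0, -1, 0, 0;0, 0, 0, 0, 0, 0, 1, 0;0, -1, 0, 0, 0, 0, 0, 0;0, 0, 1, 0, 0, 0, 0, 0;0, 0, 0, -1, 0, 0, 0, 0;1, 0, 0, 0, 0, 0, 0, 0],
  !![0, 0, 0, 0, 1, 0, 0, 0;0, 0, 0, 0, 0, 0, 0, 1;0, 0, 0, 0, 0, 0, -1, 0;0, 0, 0, 0, 0, -1, 0, 0;-1, 0, 0, 0, 0, 0, 0, 0;0, 0, 0, 1, 0, 0, 0, 0;0, 0, 1, 0, 0, 0, 0, 0;0, -1, 0, 0, 0, 0, 0, 0],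
  !![0, 0, 0, 0, 0, 1, 0, 0;0, 0, 0, 0, 0, 0, -1, 0;0, 0, 0, 0, 0, 0, 0, -1;0, 0, 0, 0, 1, 0, 0, 0;0, 0, 0, -1, 0, 0, 0, 0;-1, 0, 0, 0, 0, 0, 0, 0;0, 1, 0, 0, 0, 0, 0, 0;0, 0, 1, 0, 0, 0, 0, 0],
  !![0, 0, 0, 0, 0, 1, 0, 0;0, 0, 0, 0, 0, 0, -1, 0;0, 0, 0, 0, 0, 0, 0, 1;0, 0, 0, 0, -1, 0, 0, 0;0, 0, 0, 1, 0, 0, 0, 0;-1, 0, 0, 0, 0, 0, 0, 0;0, 1, 0, 0, 0, 0, 0, 0;0, 0, -1, 0, 0, 0, 0, 0],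
  !![0, 0, 0, 0, -1, 0, 0, 0;0, 0, 0, 0, 0, 0, 0, -1;0, 0, 0, 0, 0, 0, -1, 0;0, 0, 0, 0, 0, -1, 0, 0;1, 0, 0, 0, 0, 0, 0, 0;0, 0, 0, 1, 0, 0, 0, 0;0, 0, 1, 0, 0, 0, 0, 0;0, 1, 0, 0, 0, 0, 0, 0],
  !![0, 0, 0, 0, 0, 0, 0, -1;0, 0, 0, 0, 1, 0, 0, 0;0, 0, 0, 0, 0, 1, 0, 0;0, 0, 0, 0, 0, 0, -1, 0;0, -1, 0, 0, 0, 0, 0, 0;0, 0, -1, 0, 0, 0, 0, 0;0, 0, 0, 1, 0, 0, 0, 0;1, 0, 0, 0, 0, 0, 0, 0],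
  !![0, 0, 0, 0, 0, 0, 1, 0;0, 0, 0, 0, 0, 1, 0, 0;0, 0, 0, 0, -1, 0, 0, 0;0, 0, 0, 0, 0, 0, 0, -1;0, 0, 1, 0, 0, 0, 0, 0;0, -1, 0, 0, 0, 0, 0, 0;-1, 0, 0, 0, 0, 0, 0, 0;0, 0, 0, 1, 0, 0, 0, 0],
  !![0, 0, 0, 1, 0, 0, 0, 0;0, 0, -1, 0, 0, 0, 0, 0;0, 1, 0, 0, 0, 0, 0, 0;-1, 0, 0, 0, 0, 0, 0, 0;0, 0, 0, 0, 0, -1, 0, 0;0, 0, 0, 0, 1, 0, 0, 0;0, 0, 0, 0, 0, 0, 0, -1;0, 0, 0, 0, 0, 0, 1, 0],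
  !![0, 0, -1, 0, 0, 0, 0, 0;0, 0, 0, -1, 0, 0, 0, 0;1, 0, 0, 0, 0, 0, 0, 0;0, 1, 0, 0, 0, 0, 0, 0;0, 0, 0, 0, 0, 0, -1, 0;0, 0, 0, 0, 0, 0, 0, 1;0, 0, 0, 0, 1, 0, 0, 0;0, 0, 0, 0, 0, -1, 0, 0],
  !![0, -1, 0, 0, 0, 0, 0, 0;1, 0, 0, 0, 0, 0, 0, 0;0, 0, 0, 1, 0, 0, 0, 0;0, 0, -1, 0, 0, 0, 0, 0;0, 0, 0, 0, 0, 0, 0, -1;0, 0, 0, 0, 0, 0, -1, 0;0, 0, 0, 0, 0, 1, 0, 0;0, 0, 0, 0, 1, 0, 0, 0],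
  !![0, 1, 0, 0, 0, 0, 0, 0;-1, 0, 0, 0, 0, 0, 0, 0;0, 0, 0, -1, 0, 0, 0, 0;0, 0, 1, 0, 0, 0, 0, 0;0, 0, 0, 0, 0, 0, 0, -1;0, 0, 0, 0, 0, 0, -1, 0;0, 0, 0, 0, 0, 1, 0, 0;0, 0, 0, 0, 1, 0, 0, 0],
  !![0, 0, -1, 0, 0, 0, 0, 0;0, 0, 0, -1, 0, 0, 0, 0;1, 0, 0, 0, 0, 0, 0, 0;0, 1, 0, 0, 0, 0, 0, 0;0, 0, 0, 0, 0, 0, 1, 0;0, 0, 0, 0, 0, 0, 0, -1;0, 0, 0, 0, -1, 0, 0, 0;0, 0, 0, 0, 0, 1, 0, 0],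
  !![0, 0, 0, -1, 0, 0, 0, 0;0, 0, 1, 0, 0, 0, 0, 0;0, -1, 0, 0, 0, 0, 0, 0;1, 0, 0, 0, 0, 0, 0, 0;0, 0, 0, 0, 0, -1, 0, 0;0, 0, 0, 0, 1, 0, 0, 0;0, 0, 0, 0, 0, 0, 0, -1;0, 0, 0, 0, 0, 0, 1, 0]]


def Fmat : Fin 28 → Matrix (Fin 8) (Fin 8) ℝ := fun i => Matrix.of fun d c => ((entZ i d c : ℤ) : ℝ)

set_option maxRecDepth 100000 in
set_option maxHeartbeats 4000000 in
lemma gramZ : ∀ i j : Fin 28,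
    (∑ p : Fin 8 × Fin 8, entZ i p.1 p.2 * entZ j p.1 p.2) = if i = j then 8 else 0 := by decide

lemma Fmat_li : LinearIndependent ℝ Fmat := by
  rw [Fintype.linearIndependent_iff]
  intro g h j
  have hent : ∀ d c : Fin 8, (∑ i : Fin 28, g i * ((entZ i d c : ℤ) : ℝ)) = 0 := by
    intro d c
    have h' := congrFun (congrFun h d) c
    simpa [Fmat, Matrix.sum_apply] using h'
  have main : ∑ i : Fin 28,
      ((∑ p : Fin 8 × Fin 8, entZ j p.1 p.2 * entZ i p.1 p.2 : ℤ) : ℝ) * g i = 0 := by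
    have step : ∀ i : Fin 28,
        ((∑ p : Fin 8 × Fin 8, entZ j p.1 p.2 * entZ i p.1 p.2 : ℤ) : ℝ) * g i
          = ∑ p : Fin 8 × Fin 8, ((entZ j p.1 p.2 : ℤ) : ℝ) * (g i * ((entZ i p.1 p.2 : ℤ) : ℝ)) := by
      intro i
      push_cast [Finset.sum_mul]
      exact Finset.sum_congr rfl fun p _ => by ring
    rw [Finset.sum_congr rfl fun i _ => step i, Finset.sum_comm]
    simp only [← Finset.mul_sum]
    simp [hent]
  simp only [gramZ] at main
  simp only [apply_ite (fun z : ℤ => (z : ℝ)), ite_mul, Int.cast_ofNat, Int.cast_zero,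
    zero_mul] at main
  rw [Finset.sum_ite_eq] at main
  simp at main
  linarith [main]

lemma Lbr0 : Imat 1 = Fmat 0 := by
  have hz : ∀ d c : Fin 8, mulCoefZ 1 c d = entZ 0 d c := by intro d; fin_cases d <;> decide
  ext d c
  rw [Imat_entryZ, hz]
  rfl

lemma Lbr1 : Imat 2 = Fmat 1 := by
  have hz : ∀ d c : Fin 8, mulCoefZ 2 c d = entZ 1 d c := by intro d; fin_cases d <;> decide
  ext d c
  rw [Imat_entryZ, hz]
  rfl

lemma Lbr2 : Imat 3 = Fmat 2 := by
  have hz : ∀ d c : Fin 8, mulCoefZ 3 c d = entZ 2 d c := by intro d; fin_cases d <;> decide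
  ext d c
  rw [Imat_entryZ, hz]
  rfl

lemma Lbr3 : Imat 4 = Fmat 3 := by
  have hz : ∀ d c : Fin 8, mulCoefZ 4 c d = entZ 3 d c := by intro d; fin_cases d <;> decide
  ext d c
  rw [Imat_entryZ, hz]
  rfl

lemma Lbr4 : Imat 5 = Fmat 4 := by
  have hz : ∀ d c : Fin 8, mulCoefZ 5 c d = entZ 4 d c := by intro d; fin_cases d <;> decide
  ext d c
  rw [Imat_entryZ, hz]
  rfl

lemma Lbr5 : Imat 6 = Fmat 5 := by
  have hz : ∀ d c : Fin 8, mulCoefZ 6 c d = entZ 5 d c := by intro d; fin_cases d <;> decide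
  ext d c
  rw [Imat_entryZ, hz]
  rfl

lemma Lbr6 : Imat 7 = Fmat 6 := by
  have hz : ∀ d c : Fin 8, mulCoefZ 7 c d = entZ 6 d c := by intro d; fin_cases d <;> decide
  ext d c
  rw [Imat_entryZ, hz]
  rfl

lemma Lbr7 : Imat 1 * Imat 2 = Fmat 7 := by
  have hz : ∀ d c : Fin 8, prodZ 1 2 d c = entZ 7 d c := by intro d; fin_cases d <;> decide
  ext d c
  rw [prod_entryZ, hz]
  rfl

lemma Lbr8 : Imat 1 * Imat 3 = Fmat 8 := by
  have hz : ∀ d c : Fin 8, prodZ 1 3 d c = entZ 8 d c := by intro d; fin_cases d <;> decide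
  ext d c
  rw [prod_entryZ, hz]
  rfl

lemma Lbr9 : Imat 1 * Imat 4 = Fmat 9 := by
  have hz : ∀ d c : Fin 8, prodZ 1 4 d c = entZ 9 d c := by intro d; fin_cases d <;> decide
  ext d c
  rw [prod_entryZ, hz]
  rfl

lemma Lbr10 : Imat 1 * Imat 5 = Fmat 10 := by
  have hz : ∀ d c : Fin 8, prodZ 1 5 d c = entZ 10 d c := by intro d; fin_cases d <;> decide
  ext d c
  rw [prod_entryZ, hz]
  rfl

lemma Lbr11 : Imat 1 * Imat 6 = Fmat 11 := by
  have hz : ∀ d c : Fin 8, prodZ 1 6 d c = entZ 11 d c := by intro d; fin_cases d <;> decide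
  ext d c
  rw [prod_entryZ, hz]
  rfl

lemma Lbr12 : Imat 1 * Imat 7 = Fmat 12 := by
  have hz : ∀ d c : Fin 8, prodZ 1 7 d c = entZ 12 d c := by intro d; fin_cases d <;> decide
  ext d c
  rw [prod_entryZ, hz]
  rfl

lemma Lbr13 : Imat 2 * Imat 3 = Fmat 13 := by
  have hz : ∀ d c : Fin 8, prodZ 2 3 d c = entZ 13 d c := by intro d; fin_cases d <;> decide
  ext d c
  rw [prod_entryZ, hz]
  rfl

lemma Lbr14 : Imat 2 * Imat 4 = Fmat 14 := by
  have hz : ∀ d c : Fin 8, prodZ 2 4 d c = entZ 14 d c := by intro d; fin_cases d <;> decide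
  ext d c
  rw [prod_entryZ, hz]
  rfl

lemma Lbr15 : Imat 2 * Imat 5 = Fmat 15 := by
  have hz : ∀ d c : Fin 8, prodZ 2 5 d c = entZ 15 d c := by intro d; fin_cases d <;> decide
  ext d c
  rw [prod_entryZ, hz]
  rfl

lemma Lbr16 : Imat 2 * Imat 6 = Fmat 16 := by
  have hz : ∀ d c : Fin 8, prodZ 2 6 d c = entZ 16 d c := by intro d; fin_cases d <;> decide
  ext d c
  rw [prod_entryZ, hz]
  rfl

lemma Lbr17 : Imat 2 * Imat 7 = Fmat 17 := by
  have hz : ∀ d c : Fin 8, prodZ 2 7 d c = entZ 17 d c := by intro d; fin_cases d <;> decide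
  ext d c
  rw [prod_entryZ, hz]
  rfl

lemma Lbr18 : Imat 3 * Imat 4 = Fmat 18 := by
  have hz : ∀ d c : Fin 8, prodZ 3 4 d c = entZ 18 d c := by intro d; fin_cases d <;> decide
  ext d c
  rw [prod_entryZ, hz]
  rfl

lemma Lbr19 : Imat 3 * Imat 5 = Fmat 19 := by
  have hz : ∀ d c : Fin 8, prodZ 3 5 d c = entZ 19 d c := by intro d; fin_cases d <;> decide
  ext d c
  rw [prod_entryZ, hz]
  rfl

lemma Lbr20 : Imat 3 * Imat 6 = Fmat 20 := by
  have hz : ∀ d c : Fin 8, prodZ 3 6 d c = entZ 20 d c := by intro d; fin_cases d <;> decide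
  ext d c
  rw [prod_entryZ, hz]
  rfl

lemma Lbr21 : Imat 3 * Imat 7 = Fmat 21 := by
  have hz : ∀ d c : Fin 8, prodZ 3 7 d c = entZ 21 d c := by intro d; fin_cases d <;> decide
  ext d c
  rw [prod_entryZ, hz]
  rfl

lemma Lbr22 : Imat 4 * Imat 5 = Fmat 22 := by
  have hz : ∀ d c : Fin 8, prodZ 4 5 d c = entZ 22 d c := by intro d; fin_cases d <;> decide
  ext d c
  rw [prod_entryZ, hz]
  rfl

lemma Lbr23 : Imat 4 * Imat 6 = Fmat 23 := by
  have hz : ∀ d c : Fin 8, prodZ 4 6 d c = entZ 23 d c := by intro d; fin_cases d <;> decide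
  ext d c
  rw [prod_entryZ, hz]
  rfl

lemma Lbr24 : Imat 4 * Imat 7 = Fmat 24 := by
  have hz : ∀ d c : Fin 8, prodZ 4 7 d c = entZ 24 d c := by intro d; fin_cases d <;> decide
  ext d c
  rw [prod_entryZ, hz]
  rfl

lemma Lbr25 : Imat 5 * Imat 6 = Fmat 25 := by
  have hz : ∀ d c : Fin 8, prodZ 5 6 d c = entZ 25 d c := by intro d; fin_cases d <;> decide
  ext d c
  rw [prod_entryZ, hz]
  rfl

lemma Lbr26 : Imat 5 * Imat 7 = Fmat 26 := by
  have hz : ∀ d c : Fin 8, prodZ 5 7 d c = entZ 26 d c := by intro d; fin_cases d <;> decide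
  ext d c
  rw [prod_entryZ, hz]
  rfl

lemma Lbr27 : Imat 6 * Imat 7 = Fmat 27 := by
  have hz : ∀ d c : Fin 8, prodZ 6 7 d c = entZ 27 d c := by intro d; fin_cases d <;> decide
  ext d c
  rw [prod_entryZ, hz]
  rfl

def toIdx : Fin 28 → ({α : Fin 8 // α ≠ 0} ⊕ {p : Fin 8 × Fin 8 // p.1 ≠ 0 ∧ p.1 < p.2}) :=
  ![Sum.inl ⟨1, by decide⟩, Sum.inl ⟨2, by decide⟩, Sum.inl ⟨3, by decide⟩, Sum.inl ⟨4, by decide⟩, Sum.inl ⟨5, by decide⟩, Sum.inl ⟨6, by decide⟩, Sum.inl ⟨7, by decide⟩, Sum.inr ⟨(1,2), by decide⟩, Sum.inr ⟨(1,3), by decide⟩, Sum.inr ⟨(1,4), by decide⟩, Sum.inr ⟨(1,5), by decide⟩, Sum.inr ⟨(1,6), by decide⟩, Sum.inr ⟨(1,7), by decide⟩, Sum.inr ⟨(2,3), by decide⟩, Sum.inr ⟨(2,4), by decide⟩, Sum.inr ⟨(2,5), by decide⟩, Sum.inr ⟨(2,6), by decide⟩, Sum.inr ⟨(2,7), by decide⟩,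 Sum.inr ⟨(3,4), by decide⟩, Sum.inr ⟨(3,5), by decide⟩, Sum.inr ⟨(3,6), by decide⟩, Sum.inr ⟨(3,7), by decide⟩, Sum.inr ⟨(4,5), by decide⟩, Sum.inr ⟨(4,6), by decide⟩, Sum.inr ⟨(4,7), by decide⟩, Sum.inr ⟨(5,6), by decide⟩, Sum.inr ⟨(5,7), by decide⟩, Sum.inr ⟨(6,7), by decide⟩]

/-- The 28 matrices {I_α : 1 ≤ α ≤ 7} ∪ {I_α I_β : 1 ≤ α < β ≤ 7} are
linearly independent in M₈(ℝ). -/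
theorem Imat_linearIndependent :
    LinearIndependent ℝ
      (Sum.elim (fun α : {α : Fin 8 // α ≠ 0} => Imat α.1)
        (fun p : {p : Fin 8 × Fin 8 // p.1 ≠ 0 ∧ p.1 < p.2} => Imat p.1.1 * Imat p.1.2)) := by
  have hbij : Function.Bijective toIdx := by decide
  refine (linearIndependent_equiv (Equiv.ofBijective toIdx hbij)).mp ?_
  have hfe : (Sum.elim (fun α : {α : Fin 8 // α ≠ 0} => Imat α.1)
        (fun p : {p : Fin 8 × Fin 8 // p.1 ≠ 0 ∧ p.1 < p.2} => Imat p.1.1 * Imat p.1.2))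
      ∘ (Equiv.ofBijective toIdx hbij) = Fmat := by
    funext i
    fin_cases i
    exacts [Lbr0, Lbr1, Lbr2, Lbr3, Lbr4, Lbr5, Lbr6, Lbr7, Lbr8, Lbr9, Lbr10, Lbr11, Lbr12, Lbr13, Lbr14, Lbr15, Lbr16, Lbr17, Lbr18, Lbr19, Lbr20, Lbr21, Lbr22, Lbr23, Lbr24, Lbr25, Lbr26, Lbr27]
  rw [hfe]
  exact Fmat_li

end OC
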